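/- Let p be a prime number and let L and D be monic differential operators of MUM type of order n with coefficients in ℚ_p[[z]], with companion matrices A and B respectively. Let (f, g) be the canonical solution pair of L and (f_1, g_1) the canonical solution pair of D. Suppose H = (h_{i,j})_{1≤i,j≤n} ∈ M_n(ℚ_p[[z]]) satisfies δH = A·H − p·H·B(z^p). Set α_0 = h_{1,1}(0), α_1 = h_{1,2}(0), u = g_1/f_1, v = g/f, and for 2 ≤ j ≤ n set r_j = Σ_{i=j}^{n} binom(i−1, i−j)·h_{1,i}·(δ^{i−j} f_1)(z^p). Then: (i) Σ_{i=1}^{n} h_{1,i}·(δ^{i−1} f_1)(z^p) = α_0·f; and (ii) α_0·f·u(z^p) + r_2·(1 + (δu)(z^p)) + Σ_{j=3}^{n} r_j·(δ^{j−1} u)(z^p) = f·(p·α_0·v + α_1). (Identity (ii) expresses, with ω̃ = Log z + u and ω = Log z + v, the relation ω̃(z^p)·α_0·f + Σ_{j=2}^{n} (δ^{j−1}ω̃)(z^p)·r_j = f·(p·α_0·ω + α_1) after cancelling the Log z terms.) -/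

import Mathlib

open PowerSeries

noncomputable section

/-- The derivation `δ = z d/dz` on power series: `δ(Σ aₙ zⁿ) = Σ n aₙ zⁿ`. -/
def deltaOp {K : Type*} [Semiring K] (f : PowerSeries K) : PowerSeries K :=
  PowerSeries.mk fun k => (k : K) * PowerSeries.coeff (R := K) k f

/-- Substitution `z ↦ z^m` on power series. -/
def substPow {K : Type*} [Semiring K] (m : ℕ) (f : PowerSeries K) : PowerSeries K :=
  PowerSeries.mk fun k => if k % m = 0 then PowerSeries.coeff (R := K) (k / m) f else 0

/-- The Cartier operator `Λ_m : Σ aᵢ zⁱ ↦ Σ a_{im} zⁱ`. -/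
def cartier {K : Type*} [Semiring K] (m : ℕ) (f : PowerSeries K) : PowerSeries K :=
  PowerSeries.mk fun k => PowerSeries.coeff (R := K) (k * m) f

/-- The action of the monic operator `L = δ^n + Σ_{i<n} aᵢ δ^i` on a power series. -/
def applyOp {K : Type*} [Semiring K] {n : ℕ} (a : Fin n → PowerSeries K)
    (y : PowerSeries K) : PowerSeries K :=
  deltaOp^[n] y + ∑ i : Fin n, a i * deltaOp^[(i : ℕ)] y

/-- `L⁽¹⁾ = Σ_{k=1}^{n} k·a_k·δ^{k−1}`, with `a_n = 1`. -/
def applyOp1 {K : Type*} [Semiring K] {n : ℕ} (a : Fin n → PowerSeries K)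
    (y : PowerSeries K) : PowerSeries K :=
  (n : K) • deltaOp^[n - 1] y + ∑ i : Fin n, ((i : ℕ) : K) • (a i * deltaOp^[(i : ℕ) - 1] y)

/-- Companion matrix of the monic operator `δ^n + Σ_{i<n} aᵢ δ^i`. -/
def companionM {K : Type*} [Ring K] {n : ℕ} (a : Fin n → PowerSeries K) :
    Matrix (Fin n) (Fin n) (PowerSeries K) :=
  Matrix.of fun i j =>
    if (i : ℕ) + 1 = n then -a j else if (j : ℕ) = (i : ℕ) + 1 then 1 else 0

/-- Evaluation of a matrix of power series at `z = 0` (entrywise constant term,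
viewed again as constant power series). -/
def evalZero {K : Type*} [Semiring K] {n : ℕ} (M : Matrix (Fin n) (Fin n) (PowerSeries K)) :
    Matrix (Fin n) (Fin n) (PowerSeries K) :=
  M.map fun f => PowerSeries.C (R := K) (PowerSeries.constantCoeff (R := K) f)

/-- The sequence `A_0 = I`, `A_{j+1} = δA_j + A_j (A − jI)`. -/
def Aseq {K : Type*} [CommRing K] {n : ℕ} (A : Matrix (Fin n) (Fin n) (PowerSeries K)) :
    ℕ → Matrix (Fin n) (Fin n) (PowerSeries K)
  | 0 => 1
  | j + 1 => (Aseq A j).map deltaOp +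
      Aseq A j * (A - (j : K) • (1 : Matrix (Fin n) (Fin n) (PowerSeries K)))

/-- `r(L) ≥ 1`: for every real `0 < r < 1`, `‖A_j/j!‖·r^j → 0` as `j → ∞`,
where `‖·‖` is the (entrywise supremum of the) Gauss norm. -/
def RadiusGE1 {K : Type*} [NormedField K] {n : ℕ}
    (A : Matrix (Fin n) (Fin n) (PowerSeries K)) : Prop :=
  ∀ r : ℝ, 0 < r → r < 1 → ∀ ε : ℝ, 0 < ε → ∃ J : ℕ, ∀ j : ℕ, J ≤ j →
    ∀ i i' : Fin n, ∀ k : ℕ,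
      ‖PowerSeries.coeff (R := K) k (Aseq A j i i')‖ * ‖((j.factorial : K))⁻¹‖ * r ^ j < ε

/-- A `p`-integral Frobenius structure for the monic operator with coefficients `a`:
a matrix `Φ ∈ Mₙ(ℤ_p[[z]])` with `det Φ ≠ 0` and `δΦ = AΦ − pΦA(z^p)`. -/
def IsPIntFrob (p : ℕ) [Fact p.Prime] {n : ℕ} (a : Fin n → PowerSeries ℚ_[p])
    (Φ : Matrix (Fin n) (Fin n) (PowerSeries ℚ_[p])) : Prop :=
  (∀ i j : Fin n, ∀ k : ℕ, ‖PowerSeries.coeff (R := ℚ_[p]) k (Φ i j)‖ ≤ 1) ∧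
  Φ.det ≠ 0 ∧
  Φ.map deltaOp =
    companionM a * Φ - (p : ℚ_[p]) • (Φ * (companionM a).map (substPow p))

/-- `exp(h) = Σ_j h^j / j!` (intended for `h` with zero constant term). -/
def psExp {K : Type*} [Field K] (h : PowerSeries K) : PowerSeries K :=
  PowerSeries.mk fun k =>
    ∑ j ∈ Finset.range (k + 1), PowerSeries.coeff (R := K) k (h ^ j) / (j.factorial : K)

/-- `(f, g)` is the canonical solution pair of the MUM operator with coefficients `a`:
`f ∈ 1 + z K[[z]]`, `g ∈ z K[[z]]`, `L(f) = 0` and `L(g) + L⁽¹⁾(f) = 0`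
(equivalently, `f` and `f·Log z + g` are solutions of `L`). -/
def IsCanonicalPair {K : Type*} [Field K] {n : ℕ} (a : Fin n → PowerSeries K)
    (f g : PowerSeries K) : Prop :=
  PowerSeries.constantCoeff (R := K) f = 1 ∧ PowerSeries.constantCoeff (R := K) g = 0 ∧
  applyOp a f = 0 ∧ applyOp a g + applyOp1 a f = 0

end
noncomputable section Basics
open PowerSeries
variable {K : Type*} [CommRing K]

@[simp] lemma coeff_deltaOp (k : ℕ) (f : PowerSeries K) :
    coeff (R := K) k (deltaOp f) = (k : K) * coeff (R := K) k f := by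
  simp [deltaOp]

lemma deltaOp_add (f g : PowerSeries K) : deltaOp (f + g) = deltaOp f + deltaOp g := by
  ext k; simp [mul_add]

lemma deltaOp_smul (c : K) (f : PowerSeries K) : deltaOp (c • f) = c • deltaOp f := by
  ext k; simp; ring

@[simp] lemma deltaOp_zero : deltaOp (0 : PowerSeries K) = 0 := by
  ext k; simp

lemma deltaOp_neg (f : PowerSeries K) : deltaOp (-f) = -deltaOp f := by
  ext k; simp

lemma deltaOp_sum {ι : Type*} (s : Finset ι) (F : ι → PowerSeries K) :
    deltaOp (∑ i ∈ s, F i) = ∑ i ∈ s, deltaOp (F i) := by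
  classical
  induction s using Finset.induction_on with
  | empty => simp
  | insert _ _ h ih => rw [Finset.sum_insert h, Finset.sum_insert h, deltaOp_add, ih]

lemma deltaOp_mul (f g : PowerSeries K) :
    deltaOp (f * g) = deltaOp f * g + f * deltaOp g := by
  ext k
  rw [coeff_deltaOp, map_add, coeff_mul, coeff_mul, coeff_mul, Finset.mul_sum,
    ← Finset.sum_add_distrib]
  refine Finset.sum_congr rfl fun x hx => ?_
  rw [Finset.HasAntidiagonal.mem_antidiagonal] at hx
  simp only [coeff_deltaOp]
  have : (k : K) = (x.1 : K) + (x.2 : K) := by exact_mod_cast congrArg (Nat.cast : ℕ → K) hx.symm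
  rw [this]; ring

lemma constantCoeff_deltaOp (f : PowerSeries K) :
    constantCoeff (R := K) (deltaOp f) = 0 := by
  rw [← coeff_zero_eq_constantCoeff, coeff_deltaOp]; simp

lemma coeff_deltaOp_iter (m k : ℕ) (f : PowerSeries K) :
    coeff (R := K) k (deltaOp^[m] f) = (k : K) ^ m * coeff (R := K) k f := by
  induction m with
  | zero => simp
  | succ m ih =>
    rw [Function.iterate_succ_apply', coeff_deltaOp, ih, pow_succ]; ring

lemma constantCoeff_deltaOp_iter (m : ℕ) (hm : m ≠ 0) (f : PowerSeries K) :
    constantCoeff (R := K) (deltaOp^[m] f) = 0 := by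
  have := coeff_deltaOp_iter (K := K) m 0 f
  rw [← coeff_zero_eq_constantCoeff]
  simpa [zero_pow hm] using this

lemma deltaOp_iter_add (m : ℕ) (f g : PowerSeries K) :
    deltaOp^[m] (f + g) = deltaOp^[m] f + deltaOp^[m] g := by
  ext k; simp [coeff_deltaOp_iter, mul_add]

lemma deltaOp_iter_smul (m : ℕ) (c : K) (f : PowerSeries K) :
    deltaOp^[m] (c • f) = c • deltaOp^[m] f := by
  ext k; simp [coeff_deltaOp_iter]; ring

end Basics
noncomputable section SubstLemmas
open PowerSeries
variable {K : Type*} [CommRing K]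

@[simp] lemma coeff_substPow (m k : ℕ) (f : PowerSeries K) :
    coeff (R := K) k (substPow m f) = if k % m = 0 then coeff (R := K) (k / m) f else 0 := by
  simp [substPow]

lemma substPow_add (m : ℕ) (f g : PowerSeries K) :
    substPow m (f + g) = substPow m f + substPow m g := by
  ext k; simp only [coeff_substPow, map_add]; split <;> simp

lemma substPow_smul (m : ℕ) (c : K) (f : PowerSeries K) :
    substPow m (c • f) = c • substPow m f := by
  ext k; simp only [coeff_substPow, map_smul, smul_eq_mul]
  split <;> simp

lemma substPow_neg (m : ℕ) (f : PowerSeries K) : substPow m (-f) = -substPow m f := by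
  ext k; simp only [coeff_substPow, map_neg]; split <;> simp

lemma substPow_sum {ι : Type*} (m : ℕ) (s : Finset ι) (F : ι → PowerSeries K) :
    substPow m (∑ i ∈ s, F i) = ∑ i ∈ s, substPow m (F i) := by
  classical
  induction s using Finset.induction_on with
  | empty => ext k; simp only [coeff_substPow]; simp
  | insert _ _ h ih => rw [Finset.sum_insert h, Finset.sum_insert h, substPow_add, ih]

@[simp] lemma substPow_one (m : ℕ) (hm : 0 < m) : substPow m (1 : PowerSeries K) = 1 := by
  ext k
  simp only [coeff_substPow, coeff_one]
  rcases Nat.eq_zero_or_pos k with rfl | hk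
  · simp [Nat.zero_mod]
  · have hk' : k ≠ 0 := by omega
    by_cases h : k % m = 0
    · have h2 : k / m ≠ 0 := by
        intro h0
        have h3 := Nat.div_add_mod k m
        rw [h0, h] at h3
        omega
      simp [h, h2, hk']
    · simp [h, hk']

@[simp] lemma constantCoeff_substPow (m : ℕ) (f : PowerSeries K) :
    constantCoeff (R := K) (substPow m f) = constantCoeff (R := K) f := by
  rw [← coeff_zero_eq_constantCoeff, coeff_substPow]
  simp [coeff_zero_eq_constantCoeff]

lemma deltaOp_substPow (m : ℕ) (f : PowerSeries K) :
    deltaOp (substPow m f) = (m : K) • substPow m (deltaOp f) := by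
  ext k
  simp only [coeff_deltaOp, coeff_substPow, map_smul, smul_eq_mul]
  by_cases h : k % m = 0
  · simp only [h, if_true, coeff_deltaOp]
    have hk : k = m * (k / m) := by
      have h3 := Nat.div_add_mod k m
      rw [h] at h3
      omega
    calc (k : K) * coeff (R := K) (k / m) f = ((m * (k/m) : ℕ) : K) * coeff (R := K) (k/m) f := by rw [← hk]
      _ = (m : K) * ((k/m : ℕ) : K) * coeff (R := K) (k/m) f := by push_cast; ring
      _ = (m : K) * (((k/m : ℕ) : K) * coeff (R := K) (k/m) f) := by ring
  · simp [h]

end SubstLemmas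

noncomputable section SubstMul
open PowerSeries Finset
variable {K : Type*} [CommRing K]

lemma substPow_mul (m : ℕ) (hm : 0 < m) (f g : PowerSeries K) :
    substPow m (f * g) = substPow m f * substPow m g := by
  ext k
  rw [coeff_mul, coeff_substPow]
  by_cases h : k % m = 0
  · rw [if_pos h, coeff_mul]
    have hdvd : m ∣ k := Nat.dvd_of_mod_eq_zero h
    rw [show (∑ x ∈ antidiagonal k, coeff (R := K) x.1 (substPow m f) * coeff (R := K) x.2 (substPow m g)) =
        ∑ x ∈ (antidiagonal k).filter (fun x => x.1 % m = 0),
          coeff (R := K) x.1 (substPow m f) * coeff (R := K) x.2 (substPow m g) from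
      (Finset.sum_filter_of_ne (by
        intro x _ hne
        by_contra hc
        exact hne (by simp [coeff_substPow, hc]))).symm]
    refine Finset.sum_bij' (fun y _ => (m * y.1, m * y.2)) (fun x _ => (x.1 / m, x.2 / m))
      ?_ ?_ ?_ ?_ ?_
    · intro y hy
      rw [Finset.HasAntidiagonal.mem_antidiagonal] at hy
      simp only [Finset.mem_filter, Finset.HasAntidiagonal.mem_antidiagonal]
      constructor
      · rw [← Nat.mul_add, hy, Nat.mul_div_cancel' hdvd]
      · simp [Nat.mul_mod_right]
    · intro x hx
      simp only [Finset.mem_filter, Finset.HasAntidiagonal.mem_antidiagonal] at hx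
      obtain ⟨hsum, h1⟩ := hx
      have hd1 : m ∣ x.1 := Nat.dvd_of_mod_eq_zero h1
      have hd2 : m ∣ x.2 := (Nat.dvd_add_right hd1).mp (hsum ▸ hdvd)
      rw [Finset.HasAntidiagonal.mem_antidiagonal]
      show x.1 / m + x.2 / m = k / m
      rw [← hsum, Nat.add_div_of_dvd_right hd1]
    · intro y hy
      simp [Nat.mul_div_cancel_left _ hm]
    · intro x hx
      simp only [Finset.mem_filter, Finset.HasAntidiagonal.mem_antidiagonal] at hx
      obtain ⟨hsum, h1⟩ := hx
      have hd1 : m ∣ x.1 := Nat.dvd_of_mod_eq_zero h1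
      have hd2 : m ∣ x.2 := (Nat.dvd_add_right hd1).mp (hsum ▸ hdvd)
      simp [Nat.mul_div_cancel' hd1, Nat.mul_div_cancel' hd2]
    · intro y hy
      simp [coeff_substPow, Nat.mul_mod_right, Nat.mul_div_cancel_left _ hm]
  · rw [if_neg h]
    refine (Finset.sum_eq_zero fun x hx => ?_).symm
    rw [Finset.HasAntidiagonal.mem_antidiagonal] at hx
    by_cases h1 : x.1 % m = 0
    · have h2 : ¬ (x.2 % m = 0) := by
        intro h2
        apply h
        have : m ∣ x.1 + x.2 := Nat.dvd_add (Nat.dvd_of_mod_eq_zero h1) (Nat.dvd_of_mod_eq_zero h2)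
        rw [hx] at this
        exact Nat.eq_zero_of_dvd_of_lt this |> fun _ => Nat.mod_eq_zero_of_dvd this
      simp [coeff_substPow, h2]
    · simp [coeff_substPow, h1]

end SubstMul
noncomputable section Leib
open PowerSeries Finset
variable {K : Type*} [CommRing K]

lemma deltaOp_iter_mul (m : ℕ) (u v : PowerSeries K) :
    deltaOp^[m] (u * v)
      = ∑ j ∈ Finset.range (m + 1),
          ((m.choose j : K)) • (deltaOp^[j] u * deltaOp^[m - j] v) := by
  ext k
  rw [coeff_deltaOp_iter, coeff_mul, Finset.mul_sum, map_sum]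
  simp only [map_smul, coeff_mul, smul_eq_mul, Finset.mul_sum, coeff_deltaOp_iter]
  rw [Finset.sum_comm]
  refine Finset.sum_congr rfl fun x hx => ?_
  rw [Finset.HasAntidiagonal.mem_antidiagonal] at hx
  have hc : ((k : K)) ^ m = ((x.1 : K) + (x.2 : K)) ^ m := by
    rw [← Nat.cast_add, hx]
  rw [hc, add_pow, Finset.sum_mul]
  refine Finset.sum_congr rfl fun j hj => ?_
  ring

end Leib
noncomputable section Uniq
open PowerSeries Finset

variable {K : Type*} [Field K] [CharZero K]

lemma applyOp_smul {n : ℕ} (a : Fin n → PowerSeries K) (c : K) (y : PowerSeries K) :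
    applyOp a (c • y) = c • applyOp a y := by
  unfold applyOp
  rw [deltaOp_iter_smul, smul_add, Finset.smul_sum]
  congr 1
  refine Finset.sum_congr rfl fun i _ => ?_
  rw [deltaOp_iter_smul, mul_smul_comm]

lemma applyOp_add {n : ℕ} (a : Fin n → PowerSeries K) (y z : PowerSeries K) :
    applyOp a (y + z) = applyOp a y + applyOp a z := by
  unfold applyOp
  rw [deltaOp_iter_add]
  have : ∀ i : Fin n, a i * deltaOp^[(i:ℕ)] (y + z)
      = a i * deltaOp^[(i:ℕ)] y + a i * deltaOp^[(i:ℕ)] z := by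
    intro i; rw [deltaOp_iter_add, mul_add]
  rw [Finset.sum_congr rfl fun i _ => this i, Finset.sum_add_distrib]
  abel

lemma applyOp_sub {n : ℕ} (a : Fin n → PowerSeries K) (y z : PowerSeries K) :
    applyOp a (y - z) = applyOp a y - applyOp a z := by
  have := applyOp_add a (y - z) z
  rw [sub_add_cancel] at this
  rw [this]; abel

lemma applyOp1_smul {n : ℕ} (a : Fin n → PowerSeries K) (c : K) (y : PowerSeries K) :
    applyOp1 a (c • y) = c • applyOp1 a y := by
  unfold applyOp1
  rw [deltaOp_iter_smul, smul_comm, smul_add, Finset.smul_sum]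
  congr 1
  refine Finset.sum_congr rfl fun i _ => ?_
  rw [deltaOp_iter_smul, mul_smul_comm, smul_comm]

lemma applyOp1_sub {n : ℕ} (a : Fin n → PowerSeries K) (y z : PowerSeries K) :
    applyOp1 a (y - z) = applyOp1 a y - applyOp1 a z := by
  unfold applyOp1
  have hsub : ∀ m : ℕ, deltaOp^[m] (y - z) = deltaOp^[m] y - deltaOp^[m] z := by
    intro m; ext k; simp [coeff_deltaOp_iter, mul_sub]
  rw [hsub, smul_sub]
  rw [show (∑ i : Fin n, ((i:ℕ) : K) • (a i * deltaOp^[(i:ℕ) - 1] (y - z)))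
      = ∑ i : Fin n, (((i:ℕ) : K) • (a i * deltaOp^[(i:ℕ) - 1] y)
          - ((i:ℕ) : K) • (a i * deltaOp^[(i:ℕ) - 1] z)) from
    Finset.sum_congr rfl fun i _ => by rw [hsub, mul_sub, smul_sub]]
  rw [Finset.sum_sub_distrib]
  abel

/-- A power-series solution of a MUM operator with zero constant term is zero. -/
lemma mum_zero {n : ℕ} (hn : 1 ≤ n) (a : Fin n → PowerSeries K)
    (haMUM : ∀ i, constantCoeff (R := K) (a i) = 0) (y : PowerSeries K)
    (hy : applyOp a y = 0) (h0 : constantCoeff (R := K) y = 0) : y = 0 := by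
  ext k
  rw [map_zero]
  induction k using Nat.strong_induction_on with
  | _ k ih =>
    rcases Nat.eq_zero_or_pos k with rfl | hk
    · rw [coeff_zero_eq_constantCoeff]; exact h0
    · have hco := congrArg (coeff (R := K) k) hy
      rw [map_zero] at hco
      unfold applyOp at hco
      rw [map_add, coeff_deltaOp_iter, map_sum] at hco
      have h2 : ∑ i : Fin n, coeff (R := K) k (a i * deltaOp^[(i:ℕ)] y) = 0 := by
        refine Finset.sum_eq_zero fun i _ => ?_
        rw [coeff_mul]
        refine Finset.sum_eq_zero fun x hx => ?_
        rw [Finset.HasAntidiagonal.mem_antidiagonal] at hx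
        rcases lt_or_eq_of_le (show x.2 ≤ k by omega) with hlt | heq
        · rw [coeff_deltaOp_iter, ih x.2 hlt, mul_zero, mul_zero]
        · have hx1 : x.1 = 0 := by omega
          rw [hx1, coeff_zero_eq_constantCoeff, haMUM i, zero_mul]
      rw [h2, add_zero] at hco
      have hkn : ((k : K)) ^ n ≠ 0 := pow_ne_zero _ (Nat.cast_ne_zero.mpr (by omega))
      exact (mul_eq_zero.mp hco).resolve_left hkn

/-- A power-series solution is a multiple of the canonical `f`. -/
lemma mum_unique {n : ℕ} (hn : 1 ≤ n) (a : Fin n → PowerSeries K)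
    (haMUM : ∀ i, constantCoeff (R := K) (a i) = 0) (f y : PowerSeries K)
    (hf : applyOp a f = 0) (hf0 : constantCoeff (R := K) f = 1)
    (hy : applyOp a y = 0) : y = (constantCoeff (R := K) y) • f := by
  have h := mum_zero hn a haMUM (y - (constantCoeff (R := K) y) • f) ?_ ?_
  · linear_combination (norm := abel) h
  · rw [applyOp_sub, applyOp_smul, hy, hf, smul_zero, sub_zero]
  · rw [map_sub, smul_eq_C_mul, map_mul, constantCoeff_C, hf0, mul_one, sub_self]

end Uniq
noncomputable section Comp
open PowerSeries Finset
variable {K : Type*} [Field K] [CharZero K]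

/-- Row extraction for the companion matrix: non-last row. -/
lemma comp_row_notlast {n : ℕ} (a : Fin n → PowerSeries K) (W : Fin n → PowerSeries K)
    (i : Fin n) (h : (i : ℕ) + 1 < n) :
    ∑ j : Fin n, companionM a i j * W j = W ⟨(i : ℕ) + 1, h⟩ := by
  rw [Finset.sum_eq_single (⟨(i : ℕ) + 1, h⟩ : Fin n)]
  · simp [companionM, Nat.ne_of_lt h]
  · intro j _ hj
    have : ¬ ((j : ℕ) = (i : ℕ) + 1) := by
      intro hc; exact hj (Fin.ext hc)
    simp [companionM, Nat.ne_of_lt h, this]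
  · intro hmem; exact absurd (Finset.mem_univ _) hmem

/-- Row extraction for the companion matrix: last row. -/
lemma comp_row_last {n : ℕ} (hn : 1 ≤ n) (a : Fin n → PowerSeries K)
    (W : Fin n → PowerSeries K) :
    ∑ j : Fin n, companionM a ⟨n - 1, by omega⟩ j * W j = -∑ j : Fin n, a j * W j := by
  rw [← Finset.sum_neg_distrib]
  refine Finset.sum_congr rfl fun j _ => ?_
  have : (n - 1 : ℕ) + 1 = n := by omega
  simp [companionM, this, neg_mul]

/-- Row extraction for the substituted companion matrix against a substituted vector. -/
lemma comp_subst_row {n : ℕ} (hn : 1 ≤ n) (p : ℕ) (hp : 0 < p)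
    (b : Fin n → PowerSeries K) (Y : ℕ → PowerSeries K)
    (hODE : Y n = -∑ i : Fin n, b i * Y (i : ℕ)) (j : Fin n) :
    ∑ k : Fin n, ((companionM b).map (substPow p)) j k * substPow p (Y (k : ℕ))
      = substPow p (Y ((j : ℕ) + 1)) := by
  by_cases hj : (j : ℕ) + 1 = n
  · have : ∀ k : Fin n, ((companionM b).map (substPow p)) j k = -substPow p (b k) := by
      intro k; simp [companionM, Matrix.map_apply, hj, substPow_neg]
    calc ∑ k : Fin n, ((companionM b).map (substPow p)) j k * substPow p (Y (k : ℕ))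
        = -∑ k : Fin n, substPow p (b k * Y (k : ℕ)) := by
          rw [← Finset.sum_neg_distrib]
          refine Finset.sum_congr rfl fun k _ => ?_
          rw [this k, substPow_mul p hp, neg_mul]
      _ = substPow p (-∑ k : Fin n, b k * Y (k : ℕ)) := by
          rw [substPow_neg, substPow_sum]
      _ = substPow p (Y ((j : ℕ) + 1)) := by rw [← hODE, hj]
  · have hlt : (j : ℕ) + 1 < n := by omega
    rw [Finset.sum_eq_single (⟨(j : ℕ) + 1, hlt⟩ : Fin n)]
    · have : ((companionM b).map (substPow p)) j ⟨(j : ℕ) + 1, hlt⟩ = 1 := by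
        simp [companionM, Matrix.map_apply, hj, substPow_one p hp]
      rw [this, one_mul]
    · intro k _ hk
      have : ¬ ((k : ℕ) = (j : ℕ) + 1) := fun hc => hk (Fin.ext hc)
      have hz : ((companionM b).map (substPow p)) j k = 0 := by
        have : companionM b j k = 0 := by simp [companionM, hj, this]
        simp [Matrix.map_apply, this]
        ext m; simp [coeff_substPow]
      rw [hz, zero_mul]
    · intro hmem; exact absurd (Finset.mem_univ _) hmem

@[simp] lemma substPow_zero_fun (m : ℕ) : substPow m (0 : PowerSeries K) = 0 := by
  ext k; simp [coeff_substPow]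

end Comp
noncomputable section RowD
open PowerSeries Finset
variable {K : Type*} [Field K] [CharZero K]

lemma substPow_sub (m : ℕ) (f g : PowerSeries K) :
    substPow m (f - g) = substPow m f - substPow m g := by
  ext k; simp only [coeff_substPow, map_sub]; split <;> simp

lemma rowDelta {n : ℕ} (hn : 1 ≤ n) (p : ℕ) (hp : 0 < p) (a b : Fin n → PowerSeries K)
    (H : Matrix (Fin n) (Fin n) (PowerSeries K))
    (hH : H.map deltaOp =
      companionM a * H - (p : K) • (H * (companionM b).map (substPow p)))
    (Y E : ℕ → PowerSeries K) (hODE : Y n = -∑ i : Fin n, b i * Y (i : ℕ))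
    (hdY : ∀ k : ℕ, deltaOp (Y k) = Y (k + 1) - E k) (i : Fin n) :
    deltaOp (∑ k : Fin n, H i k * substPow p (Y (k : ℕ)))
      = (∑ j : Fin n, companionM a i j * ∑ k : Fin n, H j k * substPow p (Y (k : ℕ)))
        - (p : K) • ∑ k : Fin n, H i k * substPow p (E (k : ℕ)) := by
  set M := (companionM b).map (substPow p) with hM
  set S : Fin n → PowerSeries K := fun k => substPow p (Y (k : ℕ)) with hS
  have hHe : ∀ k : Fin n, deltaOp (H i k)
      = (companionM a * H) i k - (p : K) • ((H * M) i k) := by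
    intro k
    have h1 := congrFun (congrFun hH i) k
    simpa [Matrix.map_apply, Matrix.sub_apply, Matrix.smul_apply] using h1
  have hdS : ∀ k : Fin n, deltaOp (S k)
      = (p : K) • (substPow p (Y ((k : ℕ) + 1)) - substPow p (E (k : ℕ))) := by
    intro k
    rw [hS]
    dsimp only
    rw [deltaOp_substPow, hdY (k : ℕ), substPow_sub]
  have hterm : ∀ k : Fin n, deltaOp (H i k * S k)
      = ((companionM a * H) i k * S k
          - (p : K) • ((H * M) i k * S k))
        + ((p : K) • (H i k * substPow p (Y ((k : ℕ) + 1)))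
          - (p : K) • (H i k * substPow p (E (k : ℕ)))) := by
    intro k
    rw [deltaOp_mul, hHe k, hdS k]
    rw [sub_mul, smul_mul_assoc, mul_smul_comm, mul_sub, smul_sub]
  rw [deltaOp_sum, Finset.sum_congr rfl fun k _ => hterm k, Finset.sum_add_distrib,
    Finset.sum_sub_distrib, Finset.sum_sub_distrib, ← Finset.smul_sum, ← Finset.smul_sum,
    ← Finset.smul_sum]
  have claim23 : ∑ k : Fin n, (H * M) i k * S k
      = ∑ k : Fin n, H i k * substPow p (Y ((k : ℕ) + 1)) := by
    calc ∑ k : Fin n, (H * M) i k * S k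
        = ∑ k : Fin n, ∑ j : Fin n, H i j * (M j k * S k) := by
          refine Finset.sum_congr rfl fun k _ => ?_
          rw [Matrix.mul_apply, Finset.sum_mul]
          exact Finset.sum_congr rfl fun j _ => mul_assoc _ _ _
      _ = ∑ j : Fin n, ∑ k : Fin n, H i j * (M j k * S k) := Finset.sum_comm
      _ = ∑ j : Fin n, H i j * ∑ k : Fin n, M j k * S k := by
          refine Finset.sum_congr rfl fun j _ => ?_
          rw [Finset.mul_sum]
      _ = ∑ j : Fin n, H i j * substPow p (Y ((j : ℕ) + 1)) := by
          refine Finset.sum_congr rfl fun j _ => ?_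
          rw [comp_subst_row hn p hp b Y hODE j]
  have claim1 : ∑ k : Fin n, (companionM a * H) i k * S k
      = ∑ j : Fin n, companionM a i j * ∑ k : Fin n, H j k * S k := by
    calc ∑ k : Fin n, (companionM a * H) i k * S k
        = ∑ k : Fin n, ∑ j : Fin n, companionM a i j * (H j k * S k) := by
          refine Finset.sum_congr rfl fun k _ => ?_
          rw [Matrix.mul_apply, Finset.sum_mul]
          exact Finset.sum_congr rfl fun j _ => mul_assoc _ _ _
      _ = ∑ j : Fin n, ∑ k : Fin n, companionM a i j * (H j k * S k) := Finset.sum_comm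
      _ = ∑ j : Fin n, companionM a i j * ∑ k : Fin n, H j k * S k := by
          refine Finset.sum_congr rfl fun j _ => ?_
          rw [Finset.mul_sum]
  rw [claim23, claim1]
  abel

end RowD
noncomputable section Chain
open PowerSeries Finset
variable {K : Type*} [Field K] [CharZero K]

lemma chain_iter0 {n : ℕ} (hn : 1 ≤ n) (a : Fin n → PowerSeries K) (W : Fin n → PowerSeries K)
    (hrow : ∀ i : Fin n, deltaOp (W i) = ∑ j : Fin n, companionM a i j * W j) :
    ∀ m : ℕ, ∀ h : m < n, W ⟨m, h⟩ = deltaOp^[m] (W ⟨0, by omega⟩) := by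
  intro m
  induction m with
  | zero => intro h; rfl
  | succ m ih =>
    intro h
    have hm : m < n := by omega
    have hr := hrow ⟨m, hm⟩
    rw [comp_row_notlast a W ⟨m, hm⟩ (by simpa using h)] at hr
    rw [Function.iterate_succ_apply', ← ih hm, ← hr]

lemma chain_apply0 {n : ℕ} (hn : 1 ≤ n) (a : Fin n → PowerSeries K) (W : Fin n → PowerSeries K)
    (hrow : ∀ i : Fin n, deltaOp (W i) = ∑ j : Fin n, companionM a i j * W j) :
    applyOp a (W ⟨0, by omega⟩) = 0 := by
  have hiter := chain_iter0 hn a W hrow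
  have hlast := hrow ⟨n - 1, by omega⟩
  rw [comp_row_last hn a W] at hlast
  have h1 : deltaOp (W ⟨n - 1, by omega⟩) = deltaOp^[n] (W ⟨0, by omega⟩) := by
    rw [hiter (n - 1) (by omega), ← Function.iterate_succ_apply' deltaOp (n-1)]
    congr 1
    omega
  have h2 : ∀ j : Fin n, W j = deltaOp^[(j : ℕ)] (W ⟨0, by omega⟩) := by
    intro j
    have := hiter (j : ℕ) j.isLt
    simpa using this
  unfold applyOp
  rw [← h1, hlast]
  rw [Finset.sum_congr rfl fun j _ => by rw [h2 j]]
  abel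

lemma chain_apply1 {n : ℕ} (hn : 2 ≤ n) (a : Fin n → PowerSeries K) (c : K)
    (W : Fin n → PowerSeries K) (G : PowerSeries K)
    (hrow : ∀ i : Fin n, deltaOp (W i)
      = (∑ j : Fin n, companionM a i j * W j) - c • deltaOp^[(i : ℕ)] G) :
    applyOp a (W ⟨0, lt_of_lt_of_le two_pos hn⟩) + c • applyOp1 a G = 0 := by
  set W0 := W ⟨0, by omega⟩ with hW0
  have hiter : ∀ m : ℕ, ∀ h : m < n,
      W ⟨m, h⟩ = deltaOp^[m] W0 + (((m : K)) * c) • deltaOp^[m - 1] G := by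
    intro m
    induction m with
    | zero => intro h; simp [hW0]
    | succ m ih =>
      intro h
      have hm : m < n := by omega
      have hr := hrow ⟨m, hm⟩
      rw [comp_row_notlast a W ⟨m, hm⟩ (by simpa using h)] at hr
      have hstep : W ⟨m + 1, h⟩ = deltaOp (W ⟨m, hm⟩) + c • deltaOp^[m] G := by
        rw [hr]; abel
      rw [hstep, ih hm, deltaOp_add, deltaOp_smul]
      rcases Nat.eq_zero_or_pos m with rfl | hmp
      · simp [Function.iterate_succ_apply']
      · have hm1 : m - 1 + 1 = m := by omega
        have e1 : deltaOp (deltaOp^[m] W0) = deltaOp^[m+1] W0 :=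
          (Function.iterate_succ_apply' _ _ _).symm
        have e2 : deltaOp (deltaOp^[m-1] G) = deltaOp^[m] G := by
          rw [← Function.iterate_succ_apply' deltaOp (m-1) G]
          simp only [Nat.succ_eq_add_one, hm1]
        rw [e1, e2]
        have e3 : (((m + 1 : ℕ) : K)) * c = (m : K) * c + c := by push_cast; ring
        rw [show (m + 1) - 1 = m from rfl, e3, add_smul]
        abel
  have hlast := hrow ⟨n - 1, by omega⟩
  rw [comp_row_last (by omega) a W] at hlast
  have hj' : ∀ j : Fin n, (⟨(j : ℕ), j.isLt⟩ : Fin n) = j := fun j => rfl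
  have e1 : deltaOp (W ⟨n - 1, by omega⟩)
      = deltaOp^[n] W0 + ((((n - 1 : ℕ) : K)) * c) • deltaOp^[n-1] G := by
    rw [hiter (n - 1) (by omega), deltaOp_add, deltaOp_smul,
      ← Function.iterate_succ_apply' deltaOp (n-1) W0,
      ← Function.iterate_succ_apply' deltaOp (n-1-1) G]
    have h1 : n - 1 + 1 = n := by omega
    have h2 : n - 1 - 1 + 1 = n - 1 := by omega
    simp only [Nat.succ_eq_add_one, h1, h2]
  have e2 : ∑ j : Fin n, a j * W j
      = (∑ j : Fin n, a j * deltaOp^[(j : ℕ)] W0)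
        + ∑ j : Fin n, (((j : ℕ) : K) * c) • (a j * deltaOp^[(j : ℕ) - 1] G) := by
    rw [← Finset.sum_add_distrib]
    refine Finset.sum_congr rfl fun j _ => ?_
    have hwj : W j = deltaOp^[(j : ℕ)] W0 + (((j : ℕ) : K) * c) • deltaOp^[(j : ℕ) - 1] G := by
      have := hiter (j : ℕ) j.isLt
      rwa [hj' j] at this
    rw [hwj, mul_add, mul_smul_comm]
  unfold applyOp applyOp1
  rw [smul_add, Finset.smul_sum]
  have e3 : ∀ j : Fin n,
      c • ((((j : ℕ) : K)) • (a j * deltaOp^[(j : ℕ) - 1] G))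
        = (((j : ℕ) : K) * c) • (a j * deltaOp^[(j : ℕ) - 1] G) := fun j => by
    rw [smul_smul, mul_comm]
  rw [Finset.sum_congr rfl fun j _ => e3 j]
  have e4 : c • ((n : K) • deltaOp^[n-1] G) = ((n : K) * c) • deltaOp^[n-1] G := by
    rw [smul_smul, mul_comm]
  rw [e4]
  have e5 : deltaOp^[n] W0
      = -(∑ j : Fin n, a j * deltaOp^[(j : ℕ)] W0)
        - (∑ j : Fin n, (((j : ℕ) : K) * c) • (a j * deltaOp^[(j : ℕ) - 1] G))
        - c • deltaOp^[n-1] G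
        - ((((n - 1 : ℕ) : K)) * c) • deltaOp^[n-1] G := by
    have h := hlast
    rw [e1, e2] at h
    linear_combination (norm := abel) h
  rw [e5]
  have hcast : ((n : K)) * c = (((n - 1 : ℕ) : K)) * c + c := by
    have : (((n - 1 : ℕ)) : K) = (n : K) - 1 := by
      rw [Nat.cast_sub (by omega), Nat.cast_one]
    rw [this]; ring
  rw [hcast, add_smul]
  abel

end Chain
noncomputable section MainAux
open PowerSeries Finset

/-- Constant coefficient of `∑ₖ H₀ₖ (δ^k f₁)(z^p)` is `H₀₀(0)·f₁(0)`. -/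
lemma cc_WQ0 {K : Type*} [Field K] {n : ℕ} (hn : 1 ≤ n) (p : ℕ)
    (h0 : Fin n) (hz : (h0 : ℕ) = 0)
    (Hr : Fin n → PowerSeries K) (f1 : PowerSeries K) (hf10 : constantCoeff (R := K) f1 = 1) :
    constantCoeff (R := K) (∑ k : Fin n, Hr k * substPow p (deltaOp^[(k : ℕ)] f1))
      = constantCoeff (R := K) (Hr h0) := by
  rw [map_sum, Finset.sum_eq_single h0]
  · rw [map_mul, constantCoeff_substPow]
    have : (h0 : ℕ) = 0 := hz
    rw [this]
    simp [hf10]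
  · intro k _ hk
    have hkz : (k : ℕ) ≠ 0 := by
      intro hc; exact hk (Fin.ext (by omega))
    rw [map_mul, constantCoeff_substPow, constantCoeff_deltaOp_iter _ hkz, mul_zero]
  · intro hm; exact absurd (Finset.mem_univ _) hm

end MainAux

noncomputable section MainAux2
open PowerSeries Finset

lemma cc_smul {K : Type*} [Field K] (c : K) (x : PowerSeries K) :
    constantCoeff (R := K) (c • x) = c * constantCoeff (R := K) x := by
  rw [smul_eq_C_mul, map_mul, constantCoeff_C]

lemma cc_WP0 {K : Type*} [Field K] {n : ℕ} (hn : 2 ≤ n) (p : ℕ)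
    (h1 : Fin n) (hz : (h1 : ℕ) = 1)
    (Hr : Fin n → PowerSeries K) (f1 g1 : PowerSeries K)
    (hf10 : constantCoeff (R := K) f1 = 1) (hg10 : constantCoeff (R := K) g1 = 0) :
    constantCoeff (R := K) (∑ k : Fin n,
        Hr k * substPow p (deltaOp^[(k : ℕ)] g1 + (((k : ℕ) : K)) • deltaOp^[(k : ℕ) - 1] f1))
      = constantCoeff (R := K) (Hr h1) := by
  have hccg : ∀ k : ℕ, constantCoeff (R := K) (deltaOp^[k] g1) = 0 := by
    intro k
    rcases Nat.eq_zero_or_pos k with rfl | hk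
    · exact hg10
    · exact constantCoeff_deltaOp_iter _ (by omega) _
  rw [map_sum, Finset.sum_eq_single h1]
  · rw [map_mul, constantCoeff_substPow, map_add, hccg, cc_smul, hz]
    have : (1 : ℕ) - 1 = 0 := rfl
    simp [this, hf10]
  · intro k _ hk
    have hk1 : (k : ℕ) ≠ 1 := fun hc => hk (Fin.ext (by omega))
    rw [map_mul, constantCoeff_substPow, map_add, hccg, cc_smul]
    rcases Nat.eq_zero_or_pos (k : ℕ) with hkz | hkp
    · rw [hkz]; simp
    · have : (k : ℕ) - 1 ≠ 0 := by omega
      rw [constantCoeff_deltaOp_iter _ this]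
      simp
  · intro hm; exact absurd (Finset.mem_univ _) hm

end MainAux2
/-- the key intertwining identity. With `δH = A·H − p·H·B(z^p)`,
`α₀ = h_{1,1}(0)`, `α₁ = h_{1,2}(0)`, `u = g₁/f₁`, `v = g/f`, and
`r_j = Σ_{i=j}^{n} C(i−1, i−j)·h_{1,i}·(δ^{i−j} f₁)(z^p)`:
(i) `Σ_{i=1}^{n} h_{1,i}·(δ^{i−1} f₁)(z^p) = α₀·f`;
(ii) `α₀·f·u(z^p) + r₂·(1 + (δu)(z^p)) + Σ_{j=3}^{n} r_j·(δ^{j−1}u)(z^p)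
      = f·(p·α₀·v + α₁)`. -/
theorem statement10 (p : ℕ) [Fact p.Prime] (n : ℕ) (hn : 2 ≤ n)
    (a b : Fin n → PowerSeries ℚ_[p])
    -- `L` and `D` are of MUM type
    (haMUM : ∀ i, PowerSeries.constantCoeff (R := ℚ_[p]) (a i) = 0)
    (hbMUM : ∀ i, PowerSeries.constantCoeff (R := ℚ_[p]) (b i) = 0)
    -- `(f, g)` is the canonical solution pair of `L`, `(f₁, g₁)` that of `D`
    (f g f1 g1 : PowerSeries ℚ_[p])
    (hfg : IsCanonicalPair a f g) (hfg1 : IsCanonicalPair b f1 g1)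
    -- `δH = A·H − p·H·B(z^p)`
    (H : Matrix (Fin n) (Fin n) (PowerSeries ℚ_[p]))
    (hH : H.map deltaOp =
      companionM a * H - (p : ℚ_[p]) • (H * (companionM b).map (substPow p))) :
    ∀ α0 α1 : ℚ_[p], ∀ u v : PowerSeries ℚ_[p], ∀ rr : ℕ → PowerSeries ℚ_[p],
      α0 = PowerSeries.constantCoeff (R := ℚ_[p]) (H ⟨0, by omega⟩ ⟨0, by omega⟩) →
      α1 = PowerSeries.constantCoeff (R := ℚ_[p]) (H ⟨0, by omega⟩ ⟨1, by omega⟩) →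
      u = g1 * f1⁻¹ → v = g * f⁻¹ →
      -- `r_j = Σ_{i=j}^{n} C(i−1, i−j)·h_{1,i}·(δ^{i−j} f₁)(z^p)`  (1-based `i`)
      (∀ j : ℕ, rr j = ∑ i : Fin n,
        if j ≤ (i : ℕ) + 1 then
          ((((i : ℕ)).choose ((i : ℕ) + 1 - j) : ℚ_[p])) •
            (H ⟨0, by omega⟩ i * substPow p (deltaOp^[(i : ℕ) + 1 - j] f1))
        else 0) →
      -- (i)
      ((∑ i : Fin n, H ⟨0, by omega⟩ i * substPow p (deltaOp^[(i : ℕ)] f1)) = α0 • f ∧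
      -- (ii)
      α0 • (f * substPow p u) + rr 2 * (1 + substPow p (deltaOp u)) +
          (∑ j ∈ Finset.Icc 3 n, rr j * substPow p (deltaOp^[j - 1] u)) =
        f * (((p : ℚ_[p]) * α0) • v + PowerSeries.C (R := ℚ_[p]) α1)) := by
  intro α0 α1 u v rr hα0 hα1 hu hv hrr
  have hp : 0 < p := Nat.Prime.pos Fact.out
  have hn1 : 1 ≤ n := by omega
  obtain ⟨hf0, hg0, hLf, hLg⟩ := hfg
  obtain ⟨hf10, hg10, hDf1, hDg1⟩ := hfg1
  have he0 : ((⟨0, by omega⟩ : Fin n) : ℕ) = 0 := rfl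
  obtain ⟨Qf, hQf⟩ : ∃ Qf : ℕ → PowerSeries ℚ_[p],
      Qf = fun k => deltaOp^[k] f1 := ⟨_, rfl⟩
  obtain ⟨Pf, hPf⟩ : ∃ Pf : ℕ → PowerSeries ℚ_[p],
      Pf = fun k => deltaOp^[k] g1 + ((k : ℚ_[p])) • deltaOp^[k - 1] f1 := ⟨_, rfl⟩
  obtain ⟨WQ, hWQ⟩ : ∃ WQ : Fin n → PowerSeries ℚ_[p],
      WQ = fun i => ∑ k : Fin n, H i k * substPow p (Qf (k : ℕ)) := ⟨_, rfl⟩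
  obtain ⟨WP, hWP⟩ : ∃ WP : Fin n → PowerSeries ℚ_[p],
      WP = fun i => ∑ k : Fin n, H i k * substPow p (Pf (k : ℕ)) := ⟨_, rfl⟩
  -- ODEs for the extended vectors
  have hODEQ : Qf n = -∑ i : Fin n, b i * Qf (i : ℕ) := by
    simp only [hQf]
    have h := hDf1
    unfold applyOp at h
    exact eq_neg_of_add_eq_zero_left h
  have hODEP : Pf n = -∑ i : Fin n, b i * Pf (i : ℕ) := by
    simp only [hPf]
    have h1 := hDg1
    unfold applyOp applyOp1 at h1
    have hterm : ∀ i : Fin n,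
        b i * (deltaOp^[(i : ℕ)] g1 + (((i : ℕ)) : ℚ_[p]) • deltaOp^[(i : ℕ) - 1] f1)
        = b i * deltaOp^[(i : ℕ)] g1 + ((i : ℕ) : ℚ_[p]) • (b i * deltaOp^[(i : ℕ) - 1] f1) := by
      intro i
      rw [mul_add, mul_smul_comm]
    rw [Finset.sum_congr rfl fun i _ => hterm i, Finset.sum_add_distrib]
    linear_combination (norm := abel) h1
  have hdQ : ∀ k : ℕ, deltaOp (Qf k) = Qf (k + 1) - (fun _ : ℕ => (0 : PowerSeries ℚ_[p])) k := by
    intro k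
    simp only [hQf]
    rw [sub_zero]
    exact (Function.iterate_succ_apply' deltaOp k f1).symm
  have hdP : ∀ k : ℕ, deltaOp (Pf k) = Pf (k + 1) - Qf k := by
    intro k
    simp only [hPf, hQf]
    rw [deltaOp_add, deltaOp_smul]
    rcases Nat.eq_zero_or_pos k with rfl | hk
    · simp [Function.iterate_succ_apply']
    · have hk1 : k - 1 + 1 = k := by omega
      have e2 : deltaOp (deltaOp^[k - 1] f1) = deltaOp^[k] f1 := by
        rw [← Function.iterate_succ_apply' deltaOp (k - 1) f1]
        simp only [Nat.succ_eq_add_one, hk1]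
      rw [e2, ← Function.iterate_succ_apply' deltaOp k g1]
      simp only [Nat.succ_eq_add_one]
      have e3 : (((k + 1 : ℕ)) : ℚ_[p]) = (k : ℚ_[p]) + 1 := by push_cast; ring
      rw [show (k + 1) - 1 = k from rfl, e3, add_smul, one_smul]
      abel
  -- row relations
  have hQrow : ∀ i : Fin n, deltaOp (WQ i) = ∑ j : Fin n, companionM a i j * WQ j := by
    intro i
    simp only [hWQ]
    have h := rowDelta hn1 p hp a b H hH Qf (fun _ => 0) hODEQ hdQ i
    rw [h]
    simp [substPow_zero_fun]
  have hQiter := chain_iter0 hn1 a WQ hQrow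
  have hQ0 : applyOp a (WQ ⟨0, by omega⟩) = 0 := chain_apply0 hn1 a WQ hQrow
  -- Part (i)
  have hccWQ : constantCoeff (R := ℚ_[p]) (WQ ⟨0, by omega⟩) = α0 := by
    simp only [hWQ, hQf]
    rw [cc_WQ0 hn1 p ⟨0, by omega⟩ rfl (fun k => H ⟨0, by omega⟩ k) f1 hf10]
    rw [hα0]
  have hWQ0 : WQ ⟨0, by omega⟩ = α0 • f := by
    have := mum_unique hn1 a haMUM f (WQ ⟨0, by omega⟩) hLf hf0 hQ0
    rwa [hccWQ] at this
  have hpart1 : (∑ i : Fin n, H ⟨0, by omega⟩ i * substPow p (deltaOp^[(i : ℕ)] f1))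
      = α0 • f := by
    have h := hWQ0
    simp only [hWQ, hQf] at h
    exact h
  refine ⟨hpart1, ?_⟩
  -- P side
  have hProw : ∀ i : Fin n, deltaOp (WP i)
      = (∑ j : Fin n, companionM a i j * WP j)
        - (p : ℚ_[p]) • deltaOp^[(i : ℕ)] (WQ ⟨0, by omega⟩) := by
    intro i
    simp only [hWP]
    have h := rowDelta hn1 p hp a b H hH Pf Qf hODEP hdP i
    rw [h]
    congr 1
    congr 1
    have h1 : (∑ k : Fin n, H i k * substPow p (Qf (k : ℕ))) = WQ i := by simp only [hWQ]
    rw [h1]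
    have h2 := hQiter (i : ℕ) i.isLt
    have h3 : (⟨(i : ℕ), i.isLt⟩ : Fin n) = i := rfl
    rw [h3] at h2
    rw [h2]
  have hP1 : applyOp a (WP ⟨0, by omega⟩)
      + (p : ℚ_[p]) • applyOp1 a (WQ ⟨0, by omega⟩) = 0 :=
    chain_apply1 hn a (p : ℚ_[p]) WP (WQ ⟨0, by omega⟩) hProw
  -- identify WP e0
  have hsolP : applyOp a (WP ⟨0, by omega⟩ - ((p : ℚ_[p]) * α0) • g) = 0 := by
    rw [applyOp_sub, applyOp_smul]
    have happg : applyOp a g = -applyOp1 a f := eq_neg_of_add_eq_zero_left hLg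
    rw [hWQ0, applyOp1_smul] at hP1
    have h4 : applyOp a (WP ⟨0, by omega⟩) = -((p : ℚ_[p]) • (α0 • applyOp1 a f)) :=
      eq_neg_of_add_eq_zero_left hP1
    rw [h4, happg, smul_neg, smul_smul]
    abel
  have hccWP : constantCoeff (R := ℚ_[p]) (WP ⟨0, by omega⟩) = α1 := by
    simp only [hWP, hPf]
    rw [cc_WP0 hn p ⟨1, by omega⟩ rfl (fun k => H ⟨0, by omega⟩ k) f1 g1 hf10 hg10]
    rw [hα1]
  have hWP0 : WP ⟨0, by omega⟩ = ((p : ℚ_[p]) * α0) • g + α1 • f := by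
    have hcc2 : constantCoeff (R := ℚ_[p]) (WP ⟨0, by omega⟩ - ((p : ℚ_[p]) * α0) • g) = α1 := by
      rw [map_sub, cc_smul, hccWP, hg0, mul_zero, sub_zero]
    have h5 := mum_unique hn1 a haMUM f
      (WP ⟨0, by omega⟩ - ((p : ℚ_[p]) * α0) • g) hLf hf0 hsolP
    rw [hcc2] at h5
    linear_combination (norm := abel) h5
  -- Part (ii)
  have hne1 : constantCoeff (R := ℚ_[p]) f1 ≠ 0 := by rw [hf10]; exact one_ne_zero
  have hne : constantCoeff (R := ℚ_[p]) f ≠ 0 := by rw [hf0]; exact one_ne_zero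
  have hguf : g1 = u * f1 := by
    rw [hu, mul_assoc, PowerSeries.inv_mul_cancel f1 hne1, mul_one]
  have hfv : f * v = g := by
    rw [hv, mul_comm g f⁻¹, ← mul_assoc, PowerSeries.mul_inv_cancel f hne, one_mul]
  have hRHSval : f * (((p : ℚ_[p]) * α0) • v + PowerSeries.C (R := ℚ_[p]) α1)
      = ((p : ℚ_[p]) * α0) • g + α1 • f := by
    rw [mul_add, mul_smul_comm, hfv, mul_comm f (PowerSeries.C (R := ℚ_[p]) α1), ← smul_eq_C_mul]
  have hPkExp : ∀ k : ℕ, substPow p (Pf k)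
      = (∑ j ∈ Finset.range (k + 1), ((k.choose j : ℚ_[p]))
            • (substPow p (deltaOp^[j] u) * substPow p (deltaOp^[k - j] f1)))
        + (k : ℚ_[p]) • substPow p (deltaOp^[k - 1] f1) := by
    intro k
    simp only [hPf]
    rw [substPow_add, substPow_smul, hguf, deltaOp_iter_mul, substPow_sum]
    congr 1
    refine Finset.sum_congr rfl fun j _ => ?_
    rw [substPow_smul, substPow_mul p hp]
  have hT2 : (∑ k : Fin n, H ⟨0, by omega⟩ k
        * (((k : ℕ) : ℚ_[p]) • substPow p (deltaOp^[(k : ℕ) - 1] f1))) = rr 2 := by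
    rw [hrr 2]
    refine Finset.sum_congr rfl fun i _ => ?_
    rcases Nat.eq_zero_or_pos (i : ℕ) with hz | hpos
    · rw [if_neg (by omega), hz]
      simp
    · rw [if_pos (by omega)]
      have h1 : (i : ℕ) + 1 - 2 = (i : ℕ) - 1 := by omega
      have h2 : (i : ℕ).choose ((i : ℕ) - 1) = (i : ℕ) := by
        rw [Nat.choose_symm (by omega : 1 ≤ (i : ℕ)), Nat.choose_one_right]
      rw [h1, h2, mul_smul_comm]
  have hT1 : (∑ k : Fin n, H ⟨0, by omega⟩ k
        * ∑ j ∈ Finset.range ((k : ℕ) + 1), (((k : ℕ).choose j : ℚ_[p]))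
            • (substPow p (deltaOp^[j] u) * substPow p (deltaOp^[(k : ℕ) - j] f1)))
      = ∑ j ∈ Finset.range n, rr (j + 1) * substPow p (deltaOp^[j] u) := by
    have hA : ∀ k : Fin n, H ⟨0, by omega⟩ k
        * ∑ j ∈ Finset.range ((k : ℕ) + 1), (((k : ℕ).choose j : ℚ_[p]))
            • (substPow p (deltaOp^[j] u) * substPow p (deltaOp^[(k : ℕ) - j] f1))
        = ∑ j ∈ Finset.range n,
            (if j ≤ (k : ℕ) then (((k : ℕ).choose j : ℚ_[p]))
                • (H ⟨0, by omega⟩ k * substPow p (deltaOp^[(k : ℕ) - j] f1)) else 0)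
              * substPow p (deltaOp^[j] u) := by
      intro k
      rw [Finset.mul_sum]
      have hsub : Finset.range ((k : ℕ) + 1) ⊆ Finset.range n := by
        intro x hx
        rw [Finset.mem_range] at hx ⊢
        have := k.isLt
        omega
      rw [show (∑ j ∈ Finset.range ((k : ℕ) + 1), H ⟨0, by omega⟩ k
            * ((((k : ℕ).choose j : ℚ_[p]))
              • (substPow p (deltaOp^[j] u) * substPow p (deltaOp^[(k : ℕ) - j] f1))))
          = ∑ j ∈ Finset.range ((k : ℕ) + 1),
            (if j ≤ (k : ℕ) then (((k : ℕ).choose j : ℚ_[p]))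
                • (H ⟨0, by omega⟩ k * substPow p (deltaOp^[(k : ℕ) - j] f1)) else 0)
              * substPow p (deltaOp^[j] u) from
        Finset.sum_congr rfl fun j hj => by
          rw [Finset.mem_range] at hj
          rw [if_pos (by omega), smul_mul_assoc, mul_smul_comm]
          congr 1
          ring]
      exact Finset.sum_subset hsub fun x _ hnx => by
        rw [Finset.mem_range] at hnx
        rw [if_neg (by omega), zero_mul]
    rw [Finset.sum_congr rfl fun k _ => hA k, Finset.sum_comm]
    refine Finset.sum_congr rfl fun j _ => ?_
    rw [← Finset.sum_mul]
    congr 1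
    rw [hrr (j + 1)]
    refine Finset.sum_congr rfl fun i _ => ?_
    by_cases hji : j ≤ (i : ℕ)
    · rw [if_pos hji, if_pos (by omega)]
      have h1 : (i : ℕ) + 1 - (j + 1) = (i : ℕ) - j := by omega
      rw [h1, Nat.choose_symm hji]
    · rw [if_neg hji, if_neg (by omega)]
  have hWPval : WP ⟨0, by omega⟩
      = (∑ j ∈ Finset.range n, rr (j + 1) * substPow p (deltaOp^[j] u)) + rr 2 := by
    simp only [hWP]
    rw [Finset.sum_congr rfl fun k _ => by rw [hPkExp (k : ℕ), mul_add]]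
    rw [Finset.sum_add_distrib, hT1, hT2]
  have hrr1 : rr 1 = α0 • f := by
    rw [hrr 1, ← hpart1]
    refine Finset.sum_congr rfl fun i _ => ?_
    rw [if_pos (by omega)]
    have h1 : (i : ℕ) + 1 - 1 = (i : ℕ) := rfl
    rw [h1, Nat.choose_self, Nat.cast_one, one_smul]
  have hsplit : (∑ j ∈ Finset.range n, rr (j + 1) * substPow p (deltaOp^[j] u))
      = rr 1 * substPow p (deltaOp^[0] u) + rr 2 * substPow p (deltaOp^[1] u)
        + ∑ j ∈ Finset.Ico 2 n, rr (j + 1) * substPow p (deltaOp^[j] u) := by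
    rw [Finset.range_eq_Ico,
      ← Finset.sum_Ico_consecutive _ (by omega : (0 : ℕ) ≤ 2) (by omega : 2 ≤ n)]
    congr 1
    have h02 : Finset.Ico (0 : ℕ) 2 = Finset.range 2 := by rw [Finset.range_eq_Ico]
    rw [h02, Finset.sum_range_succ, Finset.sum_range_one]
  have hreindex : (∑ j ∈ Finset.Ico 2 n, rr (j + 1) * substPow p (deltaOp^[j] u))
      = ∑ j ∈ Finset.Icc 3 n, rr j * substPow p (deltaOp^[j - 1] u) := by
    refine Finset.sum_bij' (fun j _ => j + 1) (fun j _ => j - 1) ?_ ?_ ?_ ?_ ?_ <;>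
      intro j hj <;>
      simp only [Finset.mem_Ico, Finset.mem_Icc] at hj ⊢ <;>
      first
        | omega
        | rfl
        | (congr 1 <;> omega)
  -- assemble
  rw [hRHSval, ← hWP0, hWPval, hsplit, hreindex, hrr1]
  have hsu0 : substPow p (deltaOp^[0] u) = substPow p u := rfl
  have hsu1 : substPow p (deltaOp^[1] u) = substPow p (deltaOp u) := by
    rw [Function.iterate_one]
  rw [hsu0, hsu1, smul_mul_assoc, mul_add, mul_one]
  abel
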